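/- Let C ⊂ P^2 be the cubic curve x_0^2x_2 + x_1^3 = 0 (a cuspidal cubic). Then the identity component of the subgroup of PGL_3(k) preserving C is the one-dimensional torus consisting of the transformations (x_0 : x_1 : x_2) ↦ (t^3 x_0 : t^2 x_1 : x_2), t ∈ k^*. -/

import Mathlib

open Matrix

/-- The cubic form `x₀²x₂ + x₁³` defining the cuspidal cubic `C ⊂ ℙ²`. -/
def cuspCubic {k : Type*} [Field k] (v : Fin 3 → k) : k :=
  v 0 ^ 2 * v 2 + v 1 ^ 3

/-- `g ∈ GL₃(k)` preserves the plane curve `{F = 0}` (as a transformation of `ℙ²`). -/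
def PreservesPlaneCurve {k : Type*} [Field k] (F : (Fin 3 → k) → k)
    (g : GL (Fin 3) k) : Prop :=
  ∀ v : Fin 3 → k, F ((g : Matrix (Fin 3) (Fin 3) k).mulVec v) = 0 ↔ F v = 0

/-- The diagonal transformation `(x₀:x₁:x₂) ↦ (t³x₀ : t²ωx₁ : x₂)`. -/
def cuspCubicAut {k : Type*} [Field k] (t ω : k) : Matrix (Fin 3) (Fin 3) k :=
  !![t ^ 3, 0, 0; 0, t ^ 2 * ω, 0; 0, 0, 1]

open Polynomial in
/-- If a degree-≤9 polynomial function (with no linear term) vanishes identically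
over an infinite field, all its coefficients vanish. -/
lemma coeffs_vanish {k : Type*} [Field k] [CharZero k]
    (c0 c2 c3 c4 c5 c6 c7 c8 c9 : k)
    (h : ∀ x : k, c9*x^9 + c8*x^8 + c7*x^7 + c6*x^6 + c5*x^5 + c4*x^4 + c3*x^3 + c2*x^2 + c0 = 0) :
    c0 = 0 ∧ c2 = 0 ∧ c3 = 0 ∧ c4 = 0 ∧ c5 = 0 ∧ c6 = 0 ∧ c7 = 0 ∧ c8 = 0 ∧ c9 = 0 := by
  set p : k[X] := C c9 * X^9 + C c8 * X^8 + C c7 * X^7 + C c6 * X^6 + C c5 * X^5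
      + C c4 * X^4 + C c3 * X^3 + C c2 * X^2 + C c0 with hpdef
  have hp : p = 0 := by
    apply Polynomial.funext
    intro x
    simp only [hpdef, eval_add, eval_mul, eval_pow, eval_C, eval_X, eval_zero]
    linear_combination h x
  have hcoeff : ∀ n : ℕ, p.coeff n = 0 := fun n => by rw [hp]; simp
  refine ⟨?_, ?_, ?_, ?_, ?_, ?_, ?_, ?_, ?_⟩
  · have := hcoeff 0; simpa [hpdef, coeff_C] using this
  · have := hcoeff 2; simpa [hpdef, coeff_C] using this
  · have := hcoeff 3; simpa [hpdef, coeff_C] using this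
  · have := hcoeff 4; simpa [hpdef, coeff_C] using this
  · have := hcoeff 5; simpa [hpdef, coeff_C] using this
  · have := hcoeff 6; simpa [hpdef, coeff_C] using this
  · have := hcoeff 7; simpa [hpdef, coeff_C] using this
  · have := hcoeff 8; simpa [hpdef, coeff_C] using this
  · have := hcoeff 9; simpa [hpdef, coeff_C] using this

/-- the subgroup of `PGL₃(k)` preserving the cuspidal cubic
`C = {x₀²x₂ + x₁³ = 0}` consists exactly of the transformations
`(x₀:x₁:x₂) ↦ (t³x₀ : t²ωx₁ : x₂)` with `t ∈ kˣ`, `ω³ = 1`; its identity component is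
the one-dimensional torus `{(x₀:x₁:x₂) ↦ (t³x₀ : t²x₁ : x₂) : t ∈ kˣ}` (the subgroup
`ω = 1`, a subgroup isomorphic to `Gm` via the multiplication rule below). -/
theorem stmt_5 (k : Type*) [Field k] [IsAlgClosed k] [CharZero k] :
    (∀ g : GL (Fin 3) k,
      PreservesPlaneCurve cuspCubic g ↔
        ∃ (c t : kˣ) (ω : k), ω ^ 3 = 1 ∧
          (g : Matrix (Fin 3) (Fin 3) k) = (c : k) • cuspCubicAut (t : k) ω) ∧
    (∀ t s : k, cuspCubicAut t 1 * cuspCubicAut s 1 = cuspCubicAut (t * s) 1) ∧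
    (∀ (t s c : k), cuspCubicAut t 1 = c • cuspCubicAut s 1 → t = s) := by
  refine ⟨?_, ?_, ?_⟩
  · intro g
    constructor
    · intro H
      set M : Matrix (Fin 3) (Fin 3) k := (g : Matrix (Fin 3) (Fin 3) k) with hM
      have hparam : ∀ x : k, cuspCubic (M.mulVec ![x^3, -x^2, 1]) = 0 := by
        intro x
        apply (H _).mpr
        simp [cuspCubic]
        ring
      have key := coeffs_vanish
        (M 0 2^2*M 2 2 + M 1 2^3)
        (-(M 0 2^2*M 2 1 + 2*M 0 1*M 0 2*M 2 2 + 3*M 1 1*M 1 2^2))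
        (M 0 2^2*M 2 0 + 2*M 0 0*M 0 2*M 2 2 + 3*M 1 0*M 1 2^2)
        (M 0 1^2*M 2 2 + 2*M 0 1*M 0 2*M 2 1 + 3*M 1 1^2*M 1 2)
        (-(2*M 0 0*M 0 1*M 2 2 + 2*M 0 0*M 0 2*M 2 1 + 2*M 0 1*M 0 2*M 2 0 + 6*M 1 0*M 1 1*M 1 2))
        (M 0 0^2*M 2 2 + 2*M 0 0*M 0 2*M 2 0 + 3*M 1 0^2*M 1 2 - M 0 1^2*M 2 1 - M 1 1^3)
        (M 0 1^2*M 2 0 + 2*M 0 0*M 0 1*M 2 1 + 3*M 1 0*M 1 1^2)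
        (-(M 0 0^2*M 2 1 + 2*M 0 0*M 0 1*M 2 0 + 3*M 1 0^2*M 1 1))
        (M 0 0^2*M 2 0 + M 1 0^3)
        (fun x => by
          have h := hparam x
          simp only [cuspCubic, Matrix.mulVec, dotProduct, Fin.sum_univ_three,
            Matrix.cons_val_zero, Matrix.cons_val_one, Matrix.head_cons,
            Matrix.cons_val_two, Matrix.tail_cons] at h
          linear_combination h)
      obtain ⟨h0, h2, h3, h4, h5, h6, h7, h8, h9⟩ := key
      -- the multiplier λ = M00²M22 + 2M00M02M20 + 3M10²M12 is nonzero
      have hL : M 0 0^2*M 2 2 + 2*M 0 0*M 0 2*M 2 0 + 3*M 1 0^2*M 1 2 ≠ 0 := by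
        intro hL0
        have h1 : cuspCubic (M.mulVec ![1,0,1]) = 0 := by
          simp only [cuspCubic, Matrix.mulVec, dotProduct, Fin.sum_univ_three,
            Matrix.cons_val_zero, Matrix.cons_val_one, Matrix.head_cons,
            Matrix.cons_val_two, Matrix.tail_cons]
          linear_combination h9 + hL0 + h3 + h0
        have := (H ![1,0,1]).mp h1
        simp [cuspCubic] at this
      -- inverse matrix entries
      set N : Matrix (Fin 3) (Fin 3) k := ((g⁻¹ : GL (Fin 3) k) : Matrix (Fin 3) (Fin 3) k) with hN
      have hMN : M * N = 1 := g.mul_inv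
      have hid : ∀ l j : Fin 3, M l 0 * N 0 j + M l 1 * N 1 j + M l 2 * N 2 j
          = (1 : Matrix (Fin 3) (Fin 3) k) l j := by
        intro l j
        rw [← hMN]
        simp [Matrix.mul_apply, Fin.sum_univ_three]
      have e02 : M 0 0 * N 0 2 + M 0 1 * N 1 2 + M 0 2 * N 2 2 = 0 := by
        have := hid 0 2; simpa using this
      have e12 : M 1 0 * N 0 2 + M 1 1 * N 1 2 + M 1 2 * N 2 2 = 0 := by
        have := hid 1 2; simpa using this
      have e22 : M 2 0 * N 0 2 + M 2 1 * N 1 2 + M 2 2 * N 2 2 = 1 := by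
        have := hid 2 2; simpa using this
      have e01 : M 0 0 * N 0 1 + M 0 1 * N 1 1 + M 0 2 * N 2 1 = 0 := by
        have := hid 0 1; simpa using this
      have e11 : M 1 0 * N 0 1 + M 1 1 * N 1 1 + M 1 2 * N 2 1 = 1 := by
        have := hid 1 1; simpa using this
      have e21 : M 2 0 * N 0 1 + M 2 1 * N 1 1 + M 2 2 * N 2 1 = 0 := by
        have := hid 2 1; simpa using this
      -- the cusp (0:0:1) is fixed: column-2 off-diagonal entries vanish
      have hm02 : M 0 2 = 0 := by
        have hsq : M 0 2 ^ 2 = 0 := by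
          linear_combination N 0 2 * h3 - N 1 2 * h2 + 3 * N 2 2 * h0
            - (2*M 0 2*M 2 2) * e02 - (3*M 1 2^2) * e12 - (M 0 2^2) * e22
        exact pow_eq_zero_iff two_ne_zero |>.mp hsq
      have hm12 : M 1 2 = 0 := by
        have hsq3 : (3 : k) * M 1 2 ^ 2 = 0 := by
          linear_combination N 0 1 * h3 - N 1 1 * h2 + 3 * N 2 1 * h0
            - (2*M 0 2*M 2 2) * e01 - (3*M 1 2^2) * e11 - (M 0 2^2) * e21
        have hsq : M 1 2 ^ 2 = 0 :=
          (mul_eq_zero.mp hsq3).resolve_left (by norm_num)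
        exact pow_eq_zero_iff two_ne_zero |>.mp hsq
      -- determinant nonzero gives M 2 2 ≠ 0
      have hdet : M.det ≠ 0 := by
        have : IsUnit M := ⟨g, hM.symm⟩
        exact ((Matrix.isUnit_iff_isUnit_det M).mp this).ne_zero
      have hm22 : M 2 2 ≠ 0 := by
        intro h22
        apply hdet
        rw [Matrix.det_fin_three, hm02, hm12, h22]
        ring
      -- remaining off-diagonal entries vanish
      have hm01 : M 0 1 = 0 := by
        have hsq : M 0 1 ^ 2 * M 2 2 = 0 := by
          linear_combination h4 - (2*M 0 1*M 2 1)*hm02 - (3*M 1 1^2)*hm12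
        have := (mul_eq_zero.mp hsq).resolve_right hm22
        exact pow_eq_zero_iff two_ne_zero |>.mp this
      have hlam : M 0 0^2 * M 2 2 = M 1 1^3 := by
        linear_combination h6 - (2*M 0 0*M 2 0)*hm02 - (3*M 1 0^2)*hm12 + (M 0 1*M 2 1)*hm01
      have hL' : M 0 0^2 * M 2 2 ≠ 0 := by
        intro hz
        apply hL
        linear_combination hz + (2*M 0 0*M 2 0) * hm02 + (3*M 1 0^2) * hm12
      have hm00 : M 0 0 ≠ 0 := by
        intro h; apply hL'; rw [h]; ring
      have hm11 : M 1 1 ≠ 0 := by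
        intro h; apply hL'; rw [hlam, h]; ring
      have hm10 : M 1 0 = 0 := by
        have h3' : (3:k) * (M 1 0 * M 1 1^2) = 0 := by
          linear_combination h7 - (M 0 1*M 2 0 + 2*M 0 0*M 2 1)*hm01
        have := (mul_eq_zero.mp h3').resolve_left (by norm_num : (3:k) ≠ 0)
        exact (mul_eq_zero.mp this).resolve_right (pow_ne_zero _ hm11)
      have hm20 : M 2 0 = 0 := by
        have hsq : M 0 0^2 * M 2 0 = 0 := by
          linear_combination h9 - (M 1 0^2)*hm10
        exact (mul_eq_zero.mp hsq).resolve_left (pow_ne_zero _ hm00)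
      have hm21 : M 2 1 = 0 := by
        have hsq : M 0 0^2 * M 2 1 = 0 := by
          linear_combination -h8 - (2*M 0 0*M 2 0)*hm01 - (3*M 1 0*M 1 1)*hm10
        exact (mul_eq_zero.mp hsq).resolve_left (pow_ne_zero _ hm00)
      -- construct the scalar, torus parameter and cube root of unity
      obtain ⟨t0, ht0⟩ := IsAlgClosed.exists_pow_nat_eq (M 0 0 * (M 2 2)⁻¹) (n := 3) (by norm_num)
      have ht0' : t0^3 * M 2 2 = M 0 0 := by
        rw [ht0]; field_simp
      have ht0ne : t0 ≠ 0 := by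
        intro h
        rw [h] at ht0'
        apply hm00
        linear_combination -ht0'
      have hne : M 2 2 * t0^2 ≠ 0 := mul_ne_zero hm22 (pow_ne_zero _ ht0ne)
      set ω' : k := M 1 1 * (M 2 2 * t0^2)⁻¹ with hω'
      refine ⟨Units.mk0 (M 2 2) hm22, Units.mk0 t0 ht0ne, ω', ?_, ?_⟩
      · rw [hω']
        field_simp
        linear_combination -hlam - (M 2 2*(t0^3*M 2 2 + M 0 0))*ht0'
      · have hA : M 0 0 = M 2 2 * t0^3 := by linear_combination -ht0'
        have hB : M 1 1 = M 2 2 * (t0^2 * ω') := by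
          rw [hω']
          field_simp
        have hC : M 2 2 = M 2 2 * 1 := (mul_one _).symm
        calc M = !![M 0 0, M 0 1, M 0 2; M 1 0, M 1 1, M 1 2; M 2 0, M 2 1, M 2 2] :=
              Matrix.eta_fin_three M
        _ = ((Units.mk0 (M 2 2) hm22 : kˣ) : k) • cuspCubicAut t0 ω' := by
              rw [hm01, hm02, hm10, hm12, hm20, hm21]
              nth_rewrite 1 [hA, hB, hC]
              simp [cuspCubicAut, Matrix.smul_of, Matrix.smul_cons, smul_eq_mul]
    · rintro ⟨c, t, ω, hω, hg⟩ v
      rw [hg]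
      have key : cuspCubic (((c:k) • cuspCubicAut (t:k) ω).mulVec v)
          = (c:k)^3 * (t:k)^6 * cuspCubic v := by
        simp only [cuspCubic, cuspCubicAut, Matrix.smul_apply, Pi.smul_apply,
          smul_eq_mul, Matrix.mulVec, dotProduct, Fin.sum_univ_three,
          Matrix.cons_val_zero, Matrix.cons_val_one, Matrix.head_cons,
          Matrix.cons_val_two, Matrix.tail_cons, Matrix.cons_val', Matrix.of_apply,
          Matrix.empty_val', Matrix.cons_val_fin_one, Matrix.head_fin_const]
        linear_combination ((c:k)^3*(t:k)^6*(v 1)^3) * hω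
      rw [key]
      have hne : (c:k)^3 * (t:k)^6 ≠ 0 :=
        mul_ne_zero (pow_ne_zero _ c.ne_zero) (pow_ne_zero _ t.ne_zero)
      constructor
      · intro h
        exact (mul_eq_zero.mp h).resolve_left hne
      · intro h
        rw [h, mul_zero]
  · intro t s
    ext i j
    fin_cases i <;> fin_cases j <;>
      simp [cuspCubicAut, Matrix.mul_apply, Fin.sum_univ_three] <;> ring
  · intro t s c h
    have h00 : t^3 = c * s^3 := by
      have := congrFun (congrFun h 0) 0
      simpa [cuspCubicAut] using this
    have h11 : t^2 = c * s^2 := by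
      have := congrFun (congrFun h 1) 1
      simpa [cuspCubicAut] using this
    have h22 : (1:k) = c := by
      have := congrFun (congrFun h 2) 2
      simpa [cuspCubicAut] using this
    rw [← h22, one_mul] at h00 h11
    by_cases hs : s = 0
    · subst hs
      have : t^2 = 0 := by rw [h11]; ring
      have ht : t = 0 := pow_eq_zero_iff two_ne_zero |>.mp this
      rw [ht]
    · have hmul : t * s^2 = s * s^2 := by
        linear_combination h00 - t * h11
      exact mul_right_cancel₀ (pow_ne_zero _ hs) hmul
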